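/- For every positive integer n and every fixed permutation π of [n] = {1,…,n}, the number of permutations σ of [n] that are not locally disjoint from π is at most 5^n. -/

import Mathlib

def LocallyDisjoint {n : ℕ} (σ τ : Equiv.Perm (Fin n)) : Prop :=
  ∃ a b : Fin n, a ≠ b ∧
    ((σ⁻¹ a < σ⁻¹ b ∧ σ⁻¹ b < τ⁻¹ a ∧ τ⁻¹ a < τ⁻¹ b) ∨
     (τ⁻¹ a < τ⁻¹ b ∧ τ⁻¹ b < σ⁻¹ a ∧ σ⁻¹ a < σ⁻¹ b))

namespace LDAux

variable {n : ℕ}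

/-- the 5-valued local label of a permutation -/
def enc (ρ : Equiv.Perm (Fin n)) : Fin n → Fin 5 := fun i =>
  if ρ i = i then 0
  else if ρ i < i then (if ρ⁻¹ i < i then 1 else 2)
  else (if ρ⁻¹ i < i then 3 else 4)

lemma inv_fix_iff (ρ : Equiv.Perm (Fin n)) (v : Fin n) : ρ⁻¹ v = v ↔ ρ v = v := by
  constructor
  · intro h
    have : ρ (ρ⁻¹ v) = v := ρ.apply_symm_apply v
    rwa [h] at this
  · intro h
    have : ρ⁻¹ (ρ v) = v := ρ.symm_apply_apply v
    rwa [h] at this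

set_option maxHeartbeats 1000000 in
lemma encL (ρ ρ' : Equiv.Perm (Fin n)) (i : Fin n) (hc : enc ρ i = enc ρ' i) :
    (ρ i = i ↔ ρ' i = i) ∧ (ρ i < i ↔ ρ' i < i) ∧ (ρ⁻¹ i < i ↔ ρ'⁻¹ i < i) := by
  have e1 : (ρ⁻¹ i = i) ↔ (ρ i = i) := inv_fix_iff ρ i
  have e2 : (ρ'⁻¹ i = i) ↔ (ρ' i = i) := inv_fix_iff ρ' i
  have f1 : ρ i = i → ¬ (ρ i < i) := fun h => by simp [h]
  have f1' : ρ' i = i → ¬ (ρ' i < i) := fun h => by simp [h]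
  have f2 : ρ i = i → ¬ (ρ⁻¹ i < i) := fun h => by simp [e1.mpr h]
  have f2' : ρ' i = i → ¬ (ρ'⁻¹ i < i) := fun h => by simp [e2.mpr h]
  unfold enc at hc
  split_ifs at hc <;>
    first
      | (exact absurd hc (by decide))
      | (refine ⟨?_, ?_, ?_⟩ <;> tauto)

lemma encGT (ρ ρ' : Equiv.Perm (Fin n)) (i : Fin n) (hc : enc ρ i = enc ρ' i) :
    i < ρ i ↔ i < ρ' i := by
  obtain ⟨L1, L2, _⟩ := encL ρ ρ' i hc
  constructor
  · intro h
    rcases lt_trichotomy (ρ' i) i with h' | h' | h'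
    · exact absurd (L2.mpr h') (not_lt.mpr (le_of_lt h))
    · exact absurd (L1.mpr h') (ne_of_gt h)
    · exact h'
  · intro h
    rcases lt_trichotomy (ρ i) i with h' | h' | h'
    · exact absurd (L2.mp h') (not_lt.mpr (le_of_lt h))
    · exact absurd (L1.mp h') (ne_of_gt h)
    · exact h'

/-- below-diagonal step: a disagreement at a minimal deficient position is impossible -/
lemma stepD (ρ ρ' : Equiv.Perm (Fin n))
    (hD : ∀ c d : Fin n, ρ c < ρ d → ρ d < c → c < d → False)
    (henc : enc ρ = enc ρ') (i : Fin n)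
    (hIH : ∀ j : Fin n, j < i → ρ j < j → ρ j = ρ' j)
    (h'i : ρ' i < i) (hlt : ρ i < ρ' i) : False := by
  set l := ρ' i with hl_def
  have hinv' : ρ'⁻¹ l = i := Equiv.symm_apply_apply ρ' i
  have hl : l < i := h'i
  have L := encL ρ ρ' l (congrFun henc l)
  have h2 : ρ' l ≠ l := fun h => (ne_of_gt hl) (hinv' ▸ (inv_fix_iff ρ' l).mpr h)
  have h3 : ρ l ≠ l := fun h => h2 (L.1.mp h)
  have h4 : ¬ ρ'⁻¹ l < l := by rw [hinv']; exact not_lt.mpr (le_of_lt hl)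
  have h5 : ¬ ρ⁻¹ l < l := fun h => h4 (L.2.2.mp h)
  have h6 : ρ⁻¹ l ≠ l := fun h => h3 ((inv_fix_iff ρ l).mp h)
  have hj : l < ρ⁻¹ l := lt_of_le_of_ne (not_lt.mp h5) (Ne.symm h6)
  set j := ρ⁻¹ l with hjdef
  have hρj : ρ j = l := Equiv.apply_symm_apply ρ l
  have hji : j ≠ i := by
    intro h
    rw [h] at hρj
    exact (ne_of_lt hlt) hρj
  rcases lt_or_gt_of_ne hji with hji1 | hji2
  · have hag := hIH j hji1 (by rw [hρj]; exact hj)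
    have : ρ' j = ρ' i := by rw [← hag, hρj]
    exact hji (ρ'.injective this)
  · exact hD i j (by rw [hρj]; exact hlt) (by rw [hρj]; exact hl) hji2

/-- above-diagonal step -/
lemma stepE (ρ ρ' : Equiv.Perm (Fin n))
    (hE : ∀ c d : Fin n, c < d → d < ρ c → ρ c < ρ d → False)
    (henc : enc ρ = enc ρ') (i : Fin n)
    (hIH : ∀ j : Fin n, i < j → j < ρ j → ρ j = ρ' j)
    (h'i : i < ρ' i) (hlt : ρ' i < ρ i) : False := by
  set v := ρ' i with hv_def
  have hinv' : ρ'⁻¹ v = i := Equiv.symm_apply_apply ρ' i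
  have hv : i < v := h'i
  have L := encL ρ ρ' v (congrFun henc v)
  have h2 : ρ' v ≠ v := fun h => (ne_of_lt hv) (hinv' ▸ (inv_fix_iff ρ' v).mpr h)
  have h3 : ρ v ≠ v := fun h => h2 (L.1.mp h)
  have h4 : ρ'⁻¹ v < v := by rw [hinv']; exact hv
  have h5 : ρ⁻¹ v < v := L.2.2.mpr h4
  set j := ρ⁻¹ v with hjdef
  have hρj : ρ j = v := Equiv.apply_symm_apply ρ v
  have hji : j ≠ i := by
    intro h
    rw [h] at hρj
    exact (ne_of_gt hlt) hρj
  rcases lt_or_gt_of_ne hji with hji1 | hji2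
  · exact hE j i hji1 (by rw [hρj]; exact hv) (by rw [hρj]; exact hlt)
  · have hag := hIH j hji2 (by rw [hρj]; exact h5)
    have : ρ' j = ρ' i := by rw [← hag, hρj]
    exact hji (ρ'.injective this)

lemma eq_of_enc (ρ ρ' : Equiv.Perm (Fin n))
    (hD : ∀ c d : Fin n, ρ c < ρ d → ρ d < c → c < d → False)
    (hE : ∀ c d : Fin n, c < d → d < ρ c → ρ c < ρ d → False)
    (hD' : ∀ c d : Fin n, ρ' c < ρ' d → ρ' d < c → c < d → False)
    (hE' : ∀ c d : Fin n, c < d → d < ρ' c → ρ' c < ρ' d → False)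
    (henc : enc ρ = enc ρ') : ρ = ρ' := by
  -- agreement on deficient positions by upward strong induction
  have hDag : ∀ m : ℕ, ∀ i : Fin n, i.val = m → ρ i < i → ρ i = ρ' i := by
    intro m
    induction m using Nat.strong_induction_on with
    | _ m IH =>
      intro i him hi
      have L := encL ρ ρ' i (congrFun henc i)
      have hi' : ρ' i < i := L.2.1.mp hi
      have hIH : ∀ j : Fin n, j < i → ρ j < j → ρ j = ρ' j := by
        intro j hj hj2
        exact IH j.val (him ▸ hj) j rfl hj2
      have hIH' : ∀ j : Fin n, j < i → ρ' j < j → ρ' j = ρ j := by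
        intro j hj hj2
        have hj3 : ρ j < j := (encL ρ ρ' j (congrFun henc j)).2.1.mpr hj2
        exact (hIH j hj hj3).symm
      rcases lt_trichotomy (ρ i) (ρ' i) with h | h | h
      · exact absurd (stepD ρ ρ' hD henc i hIH hi' h) id
      · exact h
      · exact absurd (stepD ρ' ρ hD' henc.symm i hIH' hi h) id
  -- agreement on exceeding positions by downward strong induction
  have hEag : ∀ m : ℕ, ∀ i : Fin n, n - i.val = m → i < ρ i → ρ i = ρ' i := by
    intro m
    induction m using Nat.strong_induction_on with
    | _ m IH =>
      intro i him hi
      have hi' : i < ρ' i := (encGT ρ ρ' i (congrFun henc i)).mp hi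
      have hIH : ∀ j : Fin n, i < j → j < ρ j → ρ j = ρ' j := by
        intro j hj hj2
        have : n - j.val < m := by
          have h1 : (i : ℕ) < j.val := hj
          have h2 : j.val < n := j.isLt
          omega
        exact IH (n - j.val) this j rfl hj2
      have hIH' : ∀ j : Fin n, i < j → j < ρ' j → ρ' j = ρ j := by
        intro j hj hj2
        have hj3 : j < ρ j := (encGT ρ ρ' j (congrFun henc j)).mpr hj2
        exact (hIH j hj hj3).symm
      rcases lt_trichotomy (ρ i) (ρ' i) with h | h | h
      · exact absurd (stepE ρ' ρ hE' henc.symm i hIH' hi h) id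
      · exact h
      · exact absurd (stepE ρ ρ' hE henc i hIH hi' h) id
  apply Equiv.ext
  intro i
  rcases lt_trichotomy (ρ i) i with h | h | h
  · exact hDag i.val i rfl h
  · have := (encL ρ ρ' i (congrFun henc i)).1.mp h
    rw [h, this]
  · exact hEag (n - i.val) i rfl h

end LDAux

theorem card_not_locallyDisjoint_le (n : ℕ) (hn : 0 < n) (π : Equiv.Perm (Fin n)) :
    Nat.card {σ : Equiv.Perm (Fin n) // ¬ LocallyDisjoint σ π} ≤ 5 ^ n := by
  classical
  set F : {σ : Equiv.Perm (Fin n) // ¬ LocallyDisjoint σ π} → (Fin n → Fin 5) :=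
    fun s => LDAux.enc (s.1⁻¹ * π) with hF_def
  have hOkD : ∀ (σ : Equiv.Perm (Fin n)), ¬ LocallyDisjoint σ π →
      ∀ c d : Fin n, (σ⁻¹ * π) c < (σ⁻¹ * π) d → (σ⁻¹ * π) d < c → c < d → False := by
    intro σ hσ c d h1 h2 h3
    apply hσ
    refine ⟨π c, π d, π.injective.ne (ne_of_lt h3), Or.inl ⟨?_, ?_, ?_⟩⟩
    · simpa [Equiv.Perm.mul_apply] using h1
    · simpa [Equiv.Perm.mul_apply, Equiv.Perm.inv_def, Equiv.symm_apply_apply] using h2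
    · simpa [Equiv.Perm.inv_def, Equiv.symm_apply_apply] using h3
  have hOkE : ∀ (σ : Equiv.Perm (Fin n)), ¬ LocallyDisjoint σ π →
      ∀ c d : Fin n, c < d → d < (σ⁻¹ * π) c → (σ⁻¹ * π) c < (σ⁻¹ * π) d → False := by
    intro σ hσ c d h1 h2 h3
    apply hσ
    refine ⟨π c, π d, π.injective.ne (ne_of_lt h1), Or.inr ⟨?_, ?_, ?_⟩⟩
    · simpa [Equiv.Perm.inv_def, Equiv.symm_apply_apply] using h1
    · simpa [Equiv.Perm.mul_apply, Equiv.Perm.inv_def, Equiv.symm_apply_apply] using h2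
    · simpa [Equiv.Perm.mul_apply] using h3
  have hFinj : Function.Injective F := by
    rintro ⟨σ, hσ⟩ ⟨σ₂, hσ₂⟩ h
    have heq : σ⁻¹ * π = σ₂⁻¹ * π :=
      LDAux.eq_of_enc _ _ (hOkD σ hσ) (hOkE σ hσ) (hOkD σ₂ hσ₂) (hOkE σ₂ hσ₂) h
    have : σ⁻¹ = σ₂⁻¹ := mul_right_cancel heq
    exact Subtype.ext (inv_injective this)
  calc Nat.card {σ : Equiv.Perm (Fin n) // ¬ LocallyDisjoint σ π}
      ≤ Nat.card (Fin n → Fin 5) := Nat.card_le_card_of_injective F hFinj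
    _ = 5 ^ n := by simp [Nat.card_eq_fintype_card]
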